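/- arXiv:2203.10632 — 6 statements merged into one kernel-verified Lean document; each statement's English description precedes it below -/
import Mathlib

section
/- For positive real numbers a_1, …, a_L with 0 ≤ a_l ≤ 1 for all l, we have (4/π²) · ∏_{l=1}^{L} (1 + a_l)/2 ≤ ∏_{l=1}^{L} (1 + a_l · cos(π/2^l))/2 ≤ ∏_{l=1}^{L} (1 + a_l)/2. -/
open Real Finset

lemma aux_cos_nonneg (l : ℕ) : 0 ≤ Real.cos (Real.pi / 2 ^ (l + 1)) := by
  apply Real.cos_nonneg_of_mem_Icc
  constructor
  · have : (0:ℝ) ≤ Real.pi / 2 ^ (l + 1) := by positivity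
    linarith [Real.pi_pos]
  · apply div_le_div_of_nonneg_left Real.pi_pos.le (by norm_num)
    calc (2:ℝ) = 2 ^ 1 := by norm_num
    _ ≤ 2 ^ (l + 1) := by
        apply pow_le_pow_right₀ (by norm_num) (by omega)

lemma aux_telescope (L : ℕ) :
    (∏ l ∈ Finset.Icc 1 L, Real.cos (Real.pi / 2 ^ (l + 1))) *
      Real.sin (Real.pi / 2 ^ (L + 1)) = 1 / 2 ^ L := by
  induction L with
  | zero => simp
  | succ n ih =>
    rw [Finset.prod_Icc_succ_top (by omega)]
    have harg : Real.pi / 2 ^ (n + 1) = 2 * (Real.pi / 2 ^ (n + 2)) := by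
      rw [pow_succ]; ring
    have h2 : Real.sin (Real.pi / 2 ^ (n + 1)) =
        2 * Real.sin (Real.pi / 2 ^ (n + 2)) * Real.cos (Real.pi / 2 ^ (n + 2)) := by
      rw [harg, Real.sin_two_mul]
    have key : ((∏ l ∈ Finset.Icc 1 n, Real.cos (Real.pi / 2 ^ (l + 1))) *
        Real.cos (Real.pi / 2 ^ (n + 1 + 1))) * Real.sin (Real.pi / 2 ^ (n + 1 + 1)) =
        (∏ l ∈ Finset.Icc 1 n, Real.cos (Real.pi / 2 ^ (l + 1))) *
          Real.sin (Real.pi / 2 ^ (n + 1)) / 2 := by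
      rw [h2]; ring
    rw [key, ih, pow_succ]; ring

lemma aux_prod_cos_ge (L : ℕ) :
    2 / Real.pi ≤ ∏ l ∈ Finset.Icc 1 L, Real.cos (Real.pi / 2 ^ (l + 1)) := by
  set P := ∏ l ∈ Finset.Icc 1 L, Real.cos (Real.pi / 2 ^ (l + 1)) with hP
  have hPnn : 0 ≤ P := Finset.prod_nonneg fun l _ => aux_cos_nonneg l
  have harg_pos : 0 < Real.pi / 2 ^ (L + 1) := by positivity
  have hsle : Real.sin (Real.pi / 2 ^ (L + 1)) ≤ Real.pi / 2 ^ (L + 1) :=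
    Real.sin_le harg_pos.le
  have heq := aux_telescope L
  have hpow : (0:ℝ) < 2 ^ L := by positivity
  have hpi := Real.pi_pos
  -- 2^(L+1) * sin ≤ π, and P * sin = 1/2^L
  have h1 : 2 ^ (L + 1) * Real.sin (Real.pi / 2 ^ (L + 1)) ≤ Real.pi := by
    rw [mul_comm, ← le_div_iff₀ (by positivity)]
    exact hsle
  rw [div_le_iff₀ hpi]
  have h2 : P * (2 ^ (L + 1) * Real.sin (Real.pi / 2 ^ (L + 1))) ≤ P * Real.pi :=
    mul_le_mul_of_nonneg_left h1 hPnn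
  have h3 : P * (2 ^ (L + 1) * Real.sin (Real.pi / 2 ^ (L + 1))) = 2 := by
    have : P * Real.sin (Real.pi / 2 ^ (L + 1)) = 1 / 2 ^ L := heq
    rw [show P * (2 ^ (L + 1) * Real.sin (Real.pi / 2 ^ (L + 1))) =
      2 ^ (L + 1) * (P * Real.sin (Real.pi / 2 ^ (L + 1))) by ring, this, pow_succ]
    field_simp
  linarith

lemma aux_prod_half_ge (L : ℕ) :
    4 / Real.pi ^ 2 ≤ ∏ l ∈ Finset.Icc 1 L, (1 + Real.cos (Real.pi / 2 ^ l)) / 2 := by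
  have hrw : ∀ l ∈ Finset.Icc 1 L, (1 + Real.cos (Real.pi / 2 ^ l)) / 2 =
      Real.cos (Real.pi / 2 ^ (l + 1)) ^ 2 := by
    intro l _
    have h2 : 2 * (Real.pi / 2 ^ (l + 1)) = Real.pi / 2 ^ l := by
      rw [pow_succ]; ring
    rw [Real.cos_sq, h2]
    ring
  rw [Finset.prod_congr rfl hrw, Finset.prod_pow]
  have h := aux_prod_cos_ge L
  have h2 : (2 / Real.pi) ^ 2 ≤ (∏ l ∈ Finset.Icc 1 L, Real.cos (Real.pi / 2 ^ (l + 1))) ^ 2 :=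
    pow_le_pow_left₀ (by positivity) h 2
  calc 4 / Real.pi ^ 2 = (2 / Real.pi) ^ 2 := by rw [div_pow]; norm_num
  _ ≤ _ := h2

/-- For `a_l ∈ [0,1]`, the product `∏ (1 + a_l cos(π/2^l))/2` is sandwiched between
`(4/π²) ∏ (1 + a_l)/2` and `∏ (1 + a_l)/2`. -/
theorem prod_cos_bounds (L : ℕ) (hL : 0 < L) (a : ℕ → ℝ)
    (ha : ∀ l ∈ Finset.Icc 1 L, 0 ≤ a l ∧ a l ≤ 1) :
    (4 / Real.pi ^ 2) * ∏ l ∈ Finset.Icc 1 L, (1 + a l) / 2 ≤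
      (∏ l ∈ Finset.Icc 1 L, (1 + a l * Real.cos (Real.pi / 2 ^ l)) / 2) ∧
    (∏ l ∈ Finset.Icc 1 L, (1 + a l * Real.cos (Real.pi / 2 ^ l)) / 2) ≤
      ∏ l ∈ Finset.Icc 1 L, (1 + a l) / 2 := by
  have hc : ∀ l ∈ Finset.Icc 1 L, 0 ≤ Real.cos (Real.pi / 2 ^ l) ∧
      Real.cos (Real.pi / 2 ^ l) ≤ 1 := by
    intro l hl
    obtain ⟨h1, -⟩ := Finset.mem_Icc.mp hl
    obtain ⟨m, rfl⟩ : ∃ m, l = m + 1 := ⟨l - 1, by omega⟩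
    exact ⟨aux_cos_nonneg m, Real.cos_le_one _⟩
  constructor
  · -- lower bound
    have step : ∏ l ∈ Finset.Icc 1 L, ((1 + Real.cos (Real.pi / 2 ^ l)) / 2 * ((1 + a l) / 2)) ≤
        ∏ l ∈ Finset.Icc 1 L, (1 + a l * Real.cos (Real.pi / 2 ^ l)) / 2 := by
      apply Finset.prod_le_prod
      · intro l hl
        obtain ⟨hc0, -⟩ := hc l hl
        obtain ⟨ha0, -⟩ := ha l hl
        positivity
      · intro l hl
        obtain ⟨hc0, hc1⟩ := hc l hl
        obtain ⟨ha0, ha1⟩ := ha l hl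
        nlinarith [mul_nonneg (sub_nonneg.mpr ha1) (sub_nonneg.mpr hc1)]
    rw [Finset.prod_mul_distrib] at step
    have hA : 0 ≤ ∏ l ∈ Finset.Icc 1 L, (1 + a l) / 2 :=
      Finset.prod_nonneg fun l hl => by obtain ⟨ha0, -⟩ := ha l hl; positivity
    calc (4 / Real.pi ^ 2) * ∏ l ∈ Finset.Icc 1 L, (1 + a l) / 2
        ≤ (∏ l ∈ Finset.Icc 1 L, (1 + Real.cos (Real.pi / 2 ^ l)) / 2) *
            ∏ l ∈ Finset.Icc 1 L, (1 + a l) / 2 :=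
          mul_le_mul_of_nonneg_right (aux_prod_half_ge L) hA
    _ ≤ _ := step
  · -- upper bound
    apply Finset.prod_le_prod
    · intro l hl
      obtain ⟨hc0, -⟩ := hc l hl
      obtain ⟨ha0, -⟩ := ha l hl
      positivity
    · intro l hl
      obtain ⟨hc0, hc1⟩ := hc l hl
      obtain ⟨ha0, ha1⟩ := ha l hl
      nlinarith
end

section
/- Let x be a positive real number and p/q a positive rational number (p, q positive integers) with |x − p/q| < 1/(2q²). Then p/q is a convergent of the continued fraction expansion of x. -/
/-- If a positive rational `p/q` approximates a positive real `x` with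
`|x - p/q| < 1/(2q²)`, then `p/q` is a convergent of the continued fraction
expansion of `x`. -/
theorem convergent_of_close_approx (x : ℝ) (hx : 0 < x) (p q : ℕ)
    (hp : 0 < p) (hq : 0 < q)
    (h : |x - (p : ℝ) / q| < 1 / (2 * (q : ℝ) ^ 2)) :
    ∃ n : ℕ, (GenContFract.of x).convs n = (p : ℝ) / q := by
  set r : ℚ := (p : ℚ) / q with hr
  have hcast : ((r : ℝ)) = (p : ℝ) / q := by push_cast [hr]; ring
  have hden : (r.den : ℝ) ≤ q := by
    have : r.den ∣ q := by
      have h2 := Rat.den_dvd (p : ℤ) (q : ℤ)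
      rw [Rat.divInt_eq_div] at h2
      push_cast at h2
      rw [← hr] at h2
      exact Int.ofNat_dvd.mp (by simpa using h2)
    exact_mod_cast Nat.le_of_dvd hq this
  have hdpos : (0:ℝ) < r.den := by exact_mod_cast r.pos
  have hb : (1:ℝ) / (2 * (q:ℝ)^2) ≤ 1 / (2 * (r.den : ℝ)^2) := by
    apply one_div_le_one_div_of_le (by positivity)
    have : (r.den : ℝ)^2 ≤ (q:ℝ)^2 := by
      apply pow_le_pow_left₀ (le_of_lt hdpos) hden
    linarith
  have h' : |x - (r : ℝ)| < 1 / (2 * (r.den : ℝ) ^ 2) := by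
    rw [hcast]; exact lt_of_lt_of_le h hb
  obtain ⟨n, hn⟩ := Real.exists_convs_eq_rat h'
  exact ⟨n, by rw [hn, hcast]⟩
end

section
/- Let r ≥ 1 and x coprime to N with multiplicative order r modulo N. For j = 0, …, r−1, define |ψ_j⟩ = (1/√r) Σ_{l=0}^{r−1} e^{−2πi l j/r} |x^l mod N⟩ in ℂ^N. Then U_B|ψ_j⟩ = e^{2πi j/r}|ψ_j⟩, where U_B|n⟩ = |x·n mod N⟩, and the states |ψ_j⟩, j = 0,…,r−1, are orthonormal. -/
open Matrix Finset Complex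

/-- The states `|ψ_j⟩ = (1/√r) Σ_l e^{-2πi l j / r} |x^l mod N⟩` are eigenvectors
of the modular-multiplication unitary `U_B |n⟩ = |x·n mod N⟩` with eigenvalues
`e^{2πi j / r}`, and they are orthonormal for `j = 0, …, r-1`. -/
theorem eigenvectors_of_modular_mult (N : ℕ) [NeZero N] (hN : 2 ≤ N)
    (x : ℕ) (hx : Nat.Coprime x N) (r : ℕ) (hr : orderOf (x : ZMod N) = r)
    (hr0 : 0 < r)
    (U : Matrix (ZMod N) (ZMod N) ℂ)
    (hU : U = Matrix.of fun m n : ZMod N => if m = (x : ZMod N) * n then (1 : ℂ) else 0)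
    (ψ : ℕ → ZMod N → ℂ)
    (hψ : ∀ j, ψ j = fun n => (1 / Real.sqrt r) * ∑ l ∈ Finset.range r,
      if n = ((x : ZMod N)) ^ l then
        Complex.exp (-(2 * Real.pi * Complex.I * l * j / r)) else 0) :
    (∀ j < r, U.mulVec (ψ j) = Complex.exp (2 * Real.pi * Complex.I * j / r) • ψ j) ∧
    (∀ j < r, ∀ j' < r,
      (∑ n : ZMod N, (starRingEnd ℂ) (ψ j n) * ψ j' n) =
        if j = j' then 1 else 0) := by
  constructor
  · -- eigenvector property
    have hxr : (x : ZMod N) ^ r = 1 := by rw [← hr]; exact pow_orderOf_eq_one _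
    have hrC : (r : ℂ) ≠ 0 := Nat.cast_ne_zero.mpr hr0.ne'
    intro j hj
    funext m
    set c : ℂ := 1 / Real.sqrt r with hc
    set E : ℂ := Complex.exp (2 * Real.pi * Complex.I * j / r) with hE
    set g : ℕ → ℂ := fun k =>
      if m = (x : ZMod N) ^ k then Complex.exp (-(2 * Real.pi * Complex.I * k * j / r)) else 0
      with hg
    have key : ∀ l : ℕ, (∑ n : ZMod N,
        (if m = (x : ZMod N) * n then (1 : ℂ) else 0) *
          (if n = (x : ZMod N) ^ l then
            Complex.exp (-(2 * Real.pi * Complex.I * l * j / r)) else 0)) = E * g (l + 1) := by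
      intro l
      rw [Finset.sum_eq_single ((x : ZMod N) ^ l)]
      · rw [if_pos rfl]
        by_cases hm : m = (x : ZMod N) * (x : ZMod N) ^ l
        · have hm' : m = (x : ZMod N) ^ (l + 1) := by rw [pow_succ']; exact hm
          have hgl : g (l + 1) = Complex.exp (-(2 * Real.pi * Complex.I * (l + 1) * j / r)) := by
            rw [hg]; simp [hm']
          rw [if_pos hm, one_mul, hgl, hE, ← Complex.exp_add]
          congr 1
          push_cast
          field_simp
          ring
        · have hm' : ¬ m = (x : ZMod N) ^ (l + 1) := by rw [pow_succ']; exact hm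
          have hgl : g (l + 1) = 0 := by rw [hg]; simp [hm']
          rw [if_neg hm, zero_mul, hgl, mul_zero]
      · intro b _ hb; simp [hb]
      · simp
    have hgr : g r = g 0 := by
      have h1 : Complex.exp (-(2 * Real.pi * Complex.I * r * j / r)) = 1 := by
        rw [Complex.exp_eq_one_iff]
        exact ⟨-(j : ℤ), by push_cast; field_simp⟩
      simp [hg, hxr, h1]
    have hsum : ∑ l ∈ Finset.range r, g (l + 1) = ∑ l ∈ Finset.range r, g l := by
      have h1 := Finset.sum_range_succ' g r
      have h2 := Finset.sum_range_succ g r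
      rw [h2, hgr] at h1
      exact add_right_cancel h1.symm
    rw [hU, hψ]
    simp only [Matrix.mulVec, dotProduct, Matrix.of_apply, Pi.smul_apply, smul_eq_mul]
    have e1 : ∀ n : ZMod N, (if m = (x : ZMod N) * n then (1:ℂ) else 0) *
        (c * ∑ l ∈ Finset.range r, if n = (x : ZMod N) ^ l then
          Complex.exp (-(2 * Real.pi * Complex.I * l * j / r)) else 0)
        = ∑ l ∈ Finset.range r, c * ((if m = (x : ZMod N) * n then (1:ℂ) else 0) *
          (if n = (x : ZMod N) ^ l then
            Complex.exp (-(2 * Real.pi * Complex.I * l * j / r)) else 0)) := by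
      intro n
      rw [Finset.mul_sum, Finset.mul_sum]
      exact Finset.sum_congr rfl fun l _ => by ring
    rw [Finset.sum_congr rfl fun n _ => e1 n, Finset.sum_comm]
    have e2 : ∀ l ∈ Finset.range r, (∑ n : ZMod N, c * ((if m = (x : ZMod N) * n then (1:ℂ) else 0) *
        (if n = (x : ZMod N) ^ l then
          Complex.exp (-(2 * Real.pi * Complex.I * l * j / r)) else 0))) = c * (E * g (l + 1)) := by
      intro l _
      rw [← Finset.mul_sum, key l]
    rw [Finset.sum_congr rfl e2]
    simp only [← Finset.mul_sum]
    rw [hsum]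
    simp only [hg]
    ring
  · -- orthonormality
    have hxr : (x : ZMod N) ^ r = 1 := by rw [← hr]; exact pow_orderOf_eq_one _
    have hrC : (r : ℂ) ≠ 0 := Nat.cast_ne_zero.mpr hr0.ne'
    have hinj : ∀ l < r, ∀ l' < r, (x : ZMod N) ^ l = (x : ZMod N) ^ l' → l = l' := by
      intro l hl l' hl' h
      set u : (ZMod N)ˣ := ZMod.unitOfCoprime x hx with hu
      have hux : (u : ZMod N) = (x : ZMod N) := rfl
      have hou : orderOf u = r := by rw [← hr, ← hux, orderOf_units]
      have : u ^ l = u ^ l' := Units.ext (by push_cast [hux]; exact h)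
      exact pow_injOn_Iio_orderOf (by simpa [hou] using hl) (by simpa [hou] using hl') this
    intro j hj j' hj'
    set c : ℂ := 1 / Real.sqrt r with hc
    set a : ℕ → ℂ := fun l => Complex.exp (2 * Real.pi * Complex.I * l * j / r) with ha
    set b : ℕ → ℂ := fun l => Complex.exp (-(2 * Real.pi * Complex.I * l * j' / r)) with hb
    set ζ : ℂ := Complex.exp (2 * Real.pi * Complex.I * ((j : ℂ) - j') / r) with hζ
    have hsq : ((Real.sqrt r : ℝ) : ℂ) * ((Real.sqrt r : ℝ) : ℂ) = (r : ℂ) := by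
      norm_cast
      exact Real.mul_self_sqrt (Nat.cast_nonneg r)
    have hcc : c * c = 1 / (r : ℂ) := by
      rw [hc, div_mul_div_comm, one_mul, hsq]
    have hconjψ : ∀ n : ZMod N, (starRingEnd ℂ) (ψ j n) =
        c * ∑ l ∈ Finset.range r, (if n = (x : ZMod N) ^ l then a l else 0) := by
      intro n
      rw [hψ]
      show (starRingEnd ℂ) (c * _) = _
      rw [_root_.map_mul, map_sum]
      have h1 : (starRingEnd ℂ) c = c := by rw [hc]; simp [map_div₀, Complex.conj_ofReal]
      rw [h1]
      refine congrArg (c * ·) (Finset.sum_congr rfl fun l _ => ?_)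
      by_cases h : n = (x : ZMod N) ^ l
      · rw [if_pos h, if_pos h, ← Complex.exp_conj, ha]
        show Complex.exp _ = Complex.exp _
        congr 1
        simp only [map_neg, map_div₀, _root_.map_mul, Complex.conj_I, Complex.conj_ofReal,
          map_natCast, map_ofNat]
        ring
      · rw [if_neg h, if_neg h, map_zero]
    have hab : ∀ l : ℕ, a l * b l = ζ ^ l := by
      intro l
      rw [ha, hb, hζ, ← Complex.exp_add, ← Complex.exp_nat_mul]
      congr 1
      field_simp
      ring
    have collapse : ∀ l l' : ℕ,
        (∑ n : ZMod N, (if n = (x : ZMod N) ^ l then a l else 0) *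
          (if n = (x : ZMod N) ^ l' then b l' else 0)) =
        if (x : ZMod N) ^ l = (x : ZMod N) ^ l' then a l * b l' else 0 := by
      intro l l'
      rw [Finset.sum_eq_single ((x : ZMod N) ^ l)]
      · rw [if_pos rfl]
        by_cases h : (x : ZMod N) ^ l = (x : ZMod N) ^ l' <;> simp [h]
      · intro n _ hn; simp [hn]
      · simp
    calc (∑ n : ZMod N, (starRingEnd ℂ) (ψ j n) * ψ j' n)
        = ∑ n : ZMod N, c * (c * (∑ l ∈ Finset.range r, ∑ l' ∈ Finset.range r,
            (if n = (x : ZMod N) ^ l then a l else 0) *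
              (if n = (x : ZMod N) ^ l' then b l' else 0))) := by
          refine Finset.sum_congr rfl fun n _ => ?_
          rw [hconjψ n, hψ]
          rw [← Finset.sum_mul_sum]
          show _ * ((fun n => c * _) n) = _
          simp only [hb]
          ring
      _ = c * (c * (∑ l ∈ Finset.range r, ∑ l' ∈ Finset.range r, ∑ n : ZMod N,
            (if n = (x : ZMod N) ^ l then a l else 0) *
              (if n = (x : ZMod N) ^ l' then b l' else 0))) := by
          rw [← Finset.mul_sum, ← Finset.mul_sum]
          refine congrArg (c * ·) (congrArg (c * ·) ?_)
          rw [Finset.sum_comm]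
          exact Finset.sum_congr rfl fun l _ => Finset.sum_comm
      _ = c * (c * (∑ l ∈ Finset.range r, ζ ^ l)) := by
          refine congrArg (c * ·) (congrArg (c * ·) ?_)
          refine Finset.sum_congr rfl fun l hl => ?_
          rw [Finset.sum_congr rfl fun l' _ => collapse l l']
          have : ∀ l' ∈ Finset.range r,
              (if (x : ZMod N) ^ l = (x : ZMod N) ^ l' then a l * b l' else 0) =
              if l = l' then a l * b l' else 0 := by
            intro l' hl'
            by_cases h : l = l'
            · subst h; simp
            · rw [if_neg h, if_neg (fun hh => h (hinj l (Finset.mem_range.mp hl) l'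
                (Finset.mem_range.mp hl') hh))]
          rw [Finset.sum_congr rfl this, Finset.sum_ite_eq (Finset.range r) l, if_pos hl, hab]
      _ = if j = j' then 1 else 0 := by
          by_cases hjj : j = j'
          · subst hjj
            have hζ1 : ζ = 1 := by
              rw [hζ]; simp
            rw [if_pos rfl, hζ1]
            simp only [one_pow, Finset.sum_const, Finset.card_range, nsmul_eq_mul, mul_one]
            rw [← mul_assoc, hcc]
            field_simp
          · have hζr : ζ ^ r = 1 := by
              rw [hζ, ← Complex.exp_nat_mul, Complex.exp_eq_one_iff]
              exact ⟨(j : ℤ) - j', by push_cast; field_simp⟩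
            have hζ1 : ζ ≠ 1 := by
              intro h
              rw [hζ, Complex.exp_eq_one_iff] at h
              obtain ⟨n, hn⟩ := h
              have h2 : (2 * (Real.pi : ℂ) * Complex.I) ≠ 0 := by
                simp [Real.pi_ne_zero, Complex.I_ne_zero]
              have h3 : (2 * (Real.pi : ℂ) * Complex.I) * ((j : ℂ) - j') =
                  (2 * (Real.pi : ℂ) * Complex.I) * (n * r) := by
                field_simp at hn
                linear_combination (2 * (Real.pi : ℂ) * Complex.I) * hn
              have h4 : (j : ℂ) - j' = n * r := mul_left_cancel₀ h2 h3
              have h5 : (j : ℤ) - j' = n * r := by exact_mod_cast h4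
              have h6 : ((j : ℤ) - j') = 0 := by
                rcases eq_or_ne n 0 with rfl | hn0
                · simpa using h5
                · exfalso
                  have : (r : ℤ) ≤ |(j : ℤ) - j'| := by
                    rw [h5, abs_mul]
                    calc (r : ℤ) = 1 * |(r : ℤ)| := by simp
                      _ ≤ |n| * |(r : ℤ)| := by
                          have : 1 ≤ |n| := Int.one_le_abs hn0
                          exact mul_le_mul_of_nonneg_right this (abs_nonneg _)
                  have habs : |(j : ℤ) - j'| < r := by
                    rw [abs_sub_lt_iff]
                    omega
                  omega
              exact hjj (by omega)
            rw [if_neg hjj, geom_sum_eq hζ1, hζr]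
            simp
end

section
/- Let Λ be a qubit quantum channel with Λ(|n⟩⟨m|) = Σ_{k,l} Λ^{nm}_{kl} |k⟩⟨l| (n,m,k,l ∈ {0,1}). Then the functional 𝒟(Λ) = max_ρ ‖Δ Λ (id − Δ) ρ‖₁, where the maximum is over qubit density matrices ρ and Δ is the dephasing map Δ(ρ) = Σ_i |i⟩⟨i|ρ|i⟩⟨i|, equals 2|Λ^{01}_{00}|. -/
open Matrix ComplexOrder

private lemma quadform2 (ρ : Matrix (Fin 2) (Fin 2) ℂ) (x : Fin 2 → ℂ) :
    dotProduct (star x) (ρ *ᵥ x) =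
      star (x 0) * (ρ 0 0 * x 0 + ρ 0 1 * x 1) +
      star (x 1) * (ρ 1 0 * x 0 + ρ 1 1 * x 1) := by
  simp [dotProduct, mulVec, Fin.sum_univ_two]

private lemma decomp2 (ρ : Matrix (Fin 2) (Fin 2) ℂ) :
    ρ - Matrix.diagonal (fun k => ρ k k) =
      ρ 0 1 • Matrix.single 0 1 1 + ρ 1 0 • Matrix.single 1 0 1 := by
  ext i j
  fin_cases i <;> fin_cases j <;>
    simp [Matrix.diagonal, Matrix.single, Matrix.sub_apply, Matrix.add_apply]

/-- For a qubit quantum channel `Λ` (trace-preserving with positive semidefinite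
Choi matrix), the functional `𝒟(Λ) = max_ρ ‖Δ Λ (id - Δ) ρ‖₁` (maximum over qubit
density matrices; since the argument of the trace norm is diagonal, `‖·‖₁` is the
sum of the absolute values of the diagonal entries) equals `2 |Λ^{01}_{00}|`,
where `Λ^{01}_{00} = ⟨0|Λ(|0⟩⟨1|)|0⟩`. -/
theorem D_eq_two_abs_offdiag
    (Λ : Matrix (Fin 2) (Fin 2) ℂ →ₗ[ℂ] Matrix (Fin 2) (Fin 2) ℂ)
    (hTP : ∀ ρ : Matrix (Fin 2) (Fin 2) ℂ, (Λ ρ).trace = ρ.trace)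
    (hCP : (Matrix.of fun p q : Fin 2 × Fin 2 =>
        (Λ (Matrix.single p.1 q.1 1)) p.2 q.2).PosSemidef) :
    IsGreatest
      {t : ℝ | ∃ ρ : Matrix (Fin 2) (Fin 2) ℂ, ρ.PosSemidef ∧ ρ.trace = 1 ∧
        t = ∑ i, ‖(Λ (ρ - Matrix.diagonal fun k => ρ k k)) i i‖}
      (2 * ‖(Λ (Matrix.single 0 1 1)) 0 0‖) := by
  set a : ℂ := (Λ (Matrix.single 0 1 1)) 0 0 with ha
  have hconj : (Λ (Matrix.single 1 0 1)) 0 0 = (starRingEnd ℂ) a := by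
    have h := hCP.1.apply ((1, 0) : Fin 2 × Fin 2) ((0, 0) : Fin 2 × Fin 2)
    simpa using h.symm
  have h01_11 : (Λ (Matrix.single 0 1 1)) 1 1 = -a := by
    have h := hTP (Matrix.single 0 1 1)
    rw [Matrix.trace_single_eq_of_ne 0 1 (1 : ℂ) (by decide),
      Matrix.trace, Fin.sum_univ_two] at h
    simp only [Matrix.diag_apply] at h
    linear_combination h
  have h10_11 : (Λ (Matrix.single 1 0 1)) 1 1 = -(starRingEnd ℂ) a := by
    have h := hTP (Matrix.single 1 0 1)
    rw [Matrix.trace_single_eq_of_ne 1 0 (1 : ℂ) (by decide),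
      Matrix.trace, Fin.sum_univ_two] at h
    simp only [Matrix.diag_apply] at h
    linear_combination h - hconj
  -- the two diagonal entries of Λ applied to the dephased-out part
  have hent : ∀ ρ : Matrix (Fin 2) (Fin 2) ℂ,
      (Λ (ρ - Matrix.diagonal fun k => ρ k k)) 0 0
        = ρ 0 1 * a + ρ 1 0 * (starRingEnd ℂ) a ∧
      (Λ (ρ - Matrix.diagonal fun k => ρ k k)) 1 1
        = -(ρ 0 1 * a + ρ 1 0 * (starRingEnd ℂ) a) := by
    intro ρ
    rw [decomp2 ρ]
    simp only [map_add, LinearMap.map_smul]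
    constructor
    · simp only [Matrix.add_apply, Matrix.smul_apply, smul_eq_mul, hconj, ← ha]
    · simp only [Matrix.add_apply, Matrix.smul_apply, smul_eq_mul, h01_11, h10_11]
      ring
  have hsum : ∀ ρ : Matrix (Fin 2) (Fin 2) ℂ,
      (∑ i, ‖(Λ (ρ - Matrix.diagonal fun k => ρ k k)) i i‖)
        = 2 * ‖ρ 0 1 * a + ρ 1 0 * (starRingEnd ℂ) a‖ := by
    intro ρ
    rw [Fin.sum_univ_two, (hent ρ).1, (hent ρ).2, norm_neg]
    ring
  constructor
  · -- membership : a maximizer exists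
    by_cases hA : a = 0
    · refine ⟨Matrix.diagonal (fun _ => (1 / 2 : ℂ)), ?_, ?_, ?_⟩
      · refine Matrix.PosSemidef.diagonal (fun _ => ?_)
        rw [show ((1 : ℂ)/2) = (((1:ℝ)/2 : ℝ) : ℂ) by norm_num]
        exact Complex.zero_le_real.mpr (by norm_num)
      · norm_num [Matrix.trace, Fin.sum_univ_two]
      · rw [hsum]
        simp [Matrix.diagonal, hA]
    · have habs : (‖a‖ : ℂ) ≠ 0 := by
        simpa using (norm_ne_zero_iff.mpr hA)
      obtain ⟨w, hww, hwa⟩ : ∃ w : ℂ, w * (starRingEnd ℂ) w = 1 ∧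
          w * a = (‖a‖ : ℂ) := by
        refine ⟨(starRingEnd ℂ) a / (‖a‖ : ℂ), ?_, ?_⟩
        · rw [map_div₀, Complex.conj_conj, Complex.conj_ofReal]
          field_simp
          rw [mul_comm ((starRingEnd ℂ) a) a, Complex.mul_conj, Complex.normSq_eq_norm_sq]
          push_cast
          ring
        · field_simp
          rw [mul_comm, Complex.mul_conj, Complex.normSq_eq_norm_sq]
          push_cast
          ring
      refine ⟨!![1/2, w/2; (starRingEnd ℂ) w / 2, 1/2], ?_, ?_, ?_⟩
      · refine Matrix.PosSemidef.of_dotProduct_mulVec_nonneg ?_ ?_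
        · ext i j
          fin_cases i <;> fin_cases j <;>
            simp [Matrix.conjTranspose_apply, map_div₀] <;> rfl
        · intro x
          rw [quadform2]
          have hx : star (x 0) * (!![1/2, w/2; (starRingEnd ℂ) w / 2, 1/2] 0 0 * x 0
                + !![1/2, w/2; (starRingEnd ℂ) w / 2, 1/2] 0 1 * x 1)
              + star (x 1) * (!![1/2, w/2; (starRingEnd ℂ) w / 2, 1/2] 1 0 * x 0
                + !![1/2, w/2; (starRingEnd ℂ) w / 2, 1/2] 1 1 * x 1)
              = (Complex.normSq (x 0 + w * x 1) / 2 : ℝ) := by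
            rw [Complex.ofReal_div, ← Complex.mul_conj]
            show star (x 0) * ((1/2 : ℂ) * x 0 + w / 2 * x 1)
                + star (x 1) * ((starRingEnd ℂ) w / 2 * x 0 + (1/2 : ℂ) * x 1)
              = (x 0 + w * x 1) * (starRingEnd ℂ) (x 0 + w * x 1) / 2
            simp only [map_add, _root_.map_mul, Complex.star_def]
            linear_combination (-((starRingEnd ℂ) (x 1) * x 1) / 2) * hww
          rw [hx]
          exact Complex.zero_le_real.mpr (div_nonneg (Complex.normSq_nonneg _) (by norm_num))
      · norm_num [Matrix.trace, Fin.sum_univ_two]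
      · rw [hsum]
        have : (!![1/2, w/2; (starRingEnd ℂ) w / 2, 1/2] : Matrix (Fin 2) (Fin 2) ℂ) 0 1 = w / 2 := by
          simp
        have h10 : (!![1/2, w/2; (starRingEnd ℂ) w / 2, 1/2] : Matrix (Fin 2) (Fin 2) ℂ) 1 0
            = (starRingEnd ℂ) w / 2 := by simp
        rw [this, h10]
        have : w / 2 * a + (starRingEnd ℂ) w / 2 * (starRingEnd ℂ) a
            = (‖a‖ : ℂ) := by
          have h2 : (starRingEnd ℂ) w * (starRingEnd ℂ) a = (‖a‖ : ℂ) := by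
            rw [← _root_.map_mul, hwa, Complex.conj_ofReal]
          linear_combination hwa / 2 + h2 / 2
        rw [this]
        simp [Complex.norm_real, abs_of_nonneg (norm_nonneg a)]
  · -- upper bound
    rintro t ⟨ρ, hPSD, htr, rfl⟩
    rw [hsum]
    set z : ℂ := ρ 0 1 with hz
    have h10 : ρ 1 0 = (starRingEnd ℂ) z := (hPSD.1.apply 1 0).symm
    -- diagonal entries are real
    have hd0 : (0 : ℂ) ≤ ρ 0 0 := by
      have h := hPSD.dotProduct_mulVec_nonneg ![1, 0]
      rw [quadform2] at h
      simpa using h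
    have hd1 : (0 : ℂ) ≤ ρ 1 1 := by
      have h := hPSD.dotProduct_mulVec_nonneg ![0, 1]
      rw [quadform2] at h
      simpa using h
    set p : ℝ := (ρ 0 0).re with hp
    set q : ℝ := (ρ 1 1).re with hq
    have hρ00 : ρ 0 0 = (p : ℂ) := by
      have := (Complex.le_def.mp hd0).2
      exact Complex.ext rfl (by simpa using this.symm)
    have hρ11 : ρ 1 1 = (q : ℂ) := by
      have := (Complex.le_def.mp hd1).2
      exact Complex.ext rfl (by simpa using this.symm)
    have hp0 : 0 ≤ p := (Complex.le_def.mp hd0).1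
    have hq0 : 0 ≤ q := (Complex.le_def.mp hd1).1
    have hpq : p + q = 1 := by
      rw [Matrix.trace, Fin.sum_univ_two] at htr
      simp only [Matrix.diag_apply] at htr
      have := congrArg Complex.re htr
      simpa [hp, hq] using this
    -- determinant-type inequalities from the quadratic form
    have hdet1 : 0 ≤ q * (p * q - Complex.normSq z) := by
      have h := hPSD.dotProduct_mulVec_nonneg ![(q : ℂ), -(starRingEnd ℂ) z]
      rw [quadform2] at h
      simp only [Matrix.cons_val_zero, Matrix.cons_val_one, Matrix.head_cons] at h
      rw [hρ00, hρ11, h10, ← hz] at h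
      have heq : star ((q : ℂ)) * ((p : ℂ) * (q : ℂ) + z * -(starRingEnd ℂ) z)
          + star (-(starRingEnd ℂ) z) * ((starRingEnd ℂ) z * (q : ℂ) + (q : ℂ) * -(starRingEnd ℂ) z)
          = ((q * (p * q - Complex.normSq z) : ℝ) : ℂ) := by
        rw [Complex.star_def, Complex.conj_ofReal]
        push_cast
        rw [← Complex.mul_conj]
        ring
      rw [heq] at h
      exact Complex.zero_le_real.mp h
    have hdet2 : 0 ≤ p * (p * q - Complex.normSq z) := by
      have h := hPSD.dotProduct_mulVec_nonneg ![-z, (p : ℂ)]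
      rw [quadform2] at h
      simp only [Matrix.cons_val_zero, Matrix.cons_val_one, Matrix.head_cons] at h
      rw [hρ00, hρ11, h10, ← hz] at h
      have heq : star (-z) * ((p : ℂ) * -z + z * (p : ℂ))
          + star ((p : ℂ)) * ((starRingEnd ℂ) z * -z + (q : ℂ) * (p : ℂ))
          = ((p * (p * q - Complex.normSq z) : ℝ) : ℂ) := by
        simp only [Complex.star_def, Complex.conj_ofReal]
        push_cast
        rw [← Complex.mul_conj]
        ring
      rw [heq] at h
      exact Complex.zero_le_real.mp h
    have h5 : 0 ≤ (p + q) * (p * q - Complex.normSq z) := by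
      have he : (p + q) * (p * q - Complex.normSq z)
          = q * (p * q - Complex.normSq z) + p * (p * q - Complex.normSq z) := by ring
      rw [he]
      exact add_nonneg hdet1 hdet2
    rw [hpq, one_mul] at h5
    have hn : Complex.normSq z ≤ 1 / 4 := by nlinarith [sq_nonneg (p - q), h5]
    have habsz : ‖z‖ ≤ 1 / 2 := by
      nlinarith [Complex.sq_norm z, norm_nonneg z]
    -- final estimate
    rw [h10, ← _root_.map_mul]
    calc 2 * ‖z * a + (starRingEnd ℂ) (z * a)‖
        = 2 * |2 * (z * a).re| := by rw [Complex.add_conj, Complex.norm_real, Real.norm_eq_abs]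
      _ ≤ 2 * (2 * ‖z * a‖) := by
          have := Complex.abs_re_le_norm (z * a)
          rw [abs_mul]
          have h2 : |(2:ℝ)| = 2 := by norm_num
          rw [h2]
          nlinarith [norm_nonneg (z * a)]
      _ = 4 * (‖z‖ * ‖a‖) := by rw [norm_mul]; ring
      _ ≤ 2 * ‖a‖ := by nlinarith [norm_nonneg a]
end

section
/- Let Λ be a quantum channel and Φ a channel satisfying ΔΦ = ΔΦΔ (detection-incoherent). Then max_ρ ‖Δ Φ Λ (id − Δ) ρ‖₁ ≤ max_ρ ‖Δ Λ (id − Δ) ρ‖₁, i.e., the functional 𝒟 is monotone under post-processing with detection-incoherent channels. -/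
open Matrix ComplexOrder


lemma psd_diag_nonneg {n : Type*} [Fintype n] [DecidableEq n] {M : Matrix n n ℂ}
    (hM : M.PosSemidef) (i : n) : 0 ≤ M i i := by
  have := hM.dotProduct_mulVec_nonneg (Pi.single i 1)
  simpa [dotProduct, mulVec, Pi.single_apply] using this

lemma psd_entry_le_trace {n : Type*} [Fintype n] [DecidableEq n] {M : Matrix n n ℂ}
    (hM : M.PosSemidef) (p q : n) : ‖M p q‖ ≤ M.trace.re := by
  have hdiag : ∀ i, 0 ≤ (M i i).re := fun i => (Complex.le_def.mp (psd_diag_nonneg hM i)).1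
  have htr : M.trace.re = ∑ i, (M i i).re := by
    simp [Matrix.trace, Matrix.diag, Complex.re_sum]
  have hle : ∀ i, (M i i).re ≤ M.trace.re := by
    intro i
    rw [htr]
    exact Finset.single_le_sum (fun j _ => hdiag j) (Finset.mem_univ i)
  have htr0 : 0 ≤ M.trace.re := by
    rw [htr]; exact Finset.sum_nonneg fun j _ => hdiag j
  have herm : M p q = star (M q p) := (hM.1.apply p q).symm
  by_cases hpq : p = q
  · subst hpq
    have h0 := psd_diag_nonneg hM p
    have : ‖M p p‖ = (M p p).re := by
      rw [Complex.norm_def, Complex.normSq_apply, ← (Complex.le_def.mp h0).2]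
      simp [Real.sqrt_mul_self (hdiag p)]
    rw [this]; exact hle p
  · by_cases hz : M q p = 0
    · rw [herm, hz]; simpa using htr0
    · have hza : ‖M q p‖ ≠ 0 := by simpa using hz
      set z := M q p with hzdef
      set r : ℂ := ((‖z‖ : ℝ) : ℂ) with hr
      set c : ℂ := -r / z with hc
      have hc1 : star c * c = 1 := by
        rw [hc, hr, Complex.star_def]
        rw [Complex.conj_mul']
        simp [norm_div, hza]
      have hc2 : z * c = -r := by rw [hc]; field_simp
      have hc3 : star c * star z = -r := by
        rw [← StarMul.star_mul, hc2, hr]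
        simp [Complex.star_def, Complex.conj_ofReal]
      have h := hM.dotProduct_mulVec_nonneg (Pi.single p c + Pi.single q 1)
      simp only [dotProduct, mulVec, Pi.add_apply, Pi.star_apply, star_add, mul_add, add_mul,
        Finset.sum_add_distrib, Pi.single_apply, mul_ite, mul_zero, mul_one, ite_mul, zero_mul,
        apply_ite (star : ℂ → ℂ), star_zero, star_one,
        Finset.sum_ite_eq', Finset.mem_univ, if_true] at h
      -- h : 0 ≤ star c * (M p p * c) + 1 * (M q p * c) + (star c * M p q + 1 * M q q)
      have hA : star c * (M p p * c) = M p p := by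
        rw [mul_comm (M p p) c, ← mul_assoc, hc1, one_mul]
      have hB : (1 : ℂ) * (M q p * c) = -r := by rw [one_mul, ← hzdef, hc2]
      have hC : star c * M p q = -r := by rw [herm, hc3]
      rw [hA, hB, hC, one_mul] at h
      have hre := (Complex.le_def.mp h).1
      simp only [Complex.add_re, Complex.neg_re, hr, Complex.ofReal_re, Complex.zero_re] at hre
      have habs : ‖M p q‖ = ‖z‖ := by
        rw [herm, Complex.star_def, Complex.norm_conj]
      rw [habs]
      have h1 := hle p
      have h2 := hle q
      linarith

lemma cabs_of_nonneg {z : ℂ} (hz : 0 ≤ z) : ‖z‖ = z.re := by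
  obtain ⟨hre, him⟩ := Complex.le_def.mp hz
  have him' : z.im = 0 := by simpa using him.symm
  rw [Complex.norm_def, Complex.normSq_apply, him']
  simpa using Real.sqrt_mul_self (by simpa using hre)

lemma key_contraction (d : ℕ) (Φ : Matrix (Fin d) (Fin d) ℂ →ₗ[ℂ] Matrix (Fin d) (Fin d) ℂ)
    (hTP : ∀ ρ : Matrix (Fin d) (Fin d) ℂ, (Φ ρ).trace = ρ.trace)
    (hCP : (Matrix.of fun p q : Fin d × Fin d =>
        (Φ (Matrix.single p.1 q.1 1)) p.2 q.2).PosSemidef)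
    (c : Fin d → ℂ) :
    ∑ i, ‖(Φ (Matrix.diagonal c)) i i‖ ≤ ∑ k, ‖c k‖ := by
  have hdec : Matrix.diagonal c = ∑ k, c k • Matrix.single k k (1 : ℂ) := by
    ext i j
    by_cases h : i = j
    · subst h
      simp [Matrix.sum_apply, Matrix.single, Matrix.diagonal_apply]
    · simp only [Matrix.sum_apply, Matrix.smul_apply, Matrix.single, Matrix.of_apply,
        Matrix.diagonal_apply, h, if_false, smul_eq_mul, mul_ite, mul_one, mul_zero]
      symm
      apply Finset.sum_eq_zero
      intro x _
      rw [if_neg]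
      rintro ⟨rfl, rfl⟩
      exact h rfl
  have happ : ∀ i, (Φ (Matrix.diagonal c)) i i
      = ∑ k, c k * (Φ (Matrix.single k k 1)) i i := by
    intro i
    rw [hdec, map_sum]
    simp only [_root_.map_smul, Matrix.sum_apply, Matrix.smul_apply, smul_eq_mul]
  have hpos : ∀ k i, 0 ≤ (Φ (Matrix.single k k 1)) i i := by
    intro k i
    have := psd_diag_nonneg hCP (k, i)
    simpa using this
  have hsum : ∀ k, ∑ i, ((Φ (Matrix.single k k 1)) i i).re = 1 := by
    intro k
    have h1 := hTP (Matrix.single k k 1)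
    have h2 : (Matrix.single k k (1:ℂ)).trace = 1 := by
      simp [Matrix.trace, Matrix.diag, Matrix.single]
    rw [h2] at h1
    have := congrArg Complex.re h1
    simpa [Matrix.trace, Matrix.diag, Complex.re_sum] using this
  calc ∑ i, ‖(Φ (Matrix.diagonal c)) i i‖
      = ∑ i, ‖∑ k, c k * (Φ (Matrix.single k k 1)) i i‖ := by
        exact Finset.sum_congr rfl fun i _ => by rw [happ i]
    _ ≤ ∑ i, ∑ k, ‖c k * (Φ (Matrix.single k k 1)) i i‖ :=
        Finset.sum_le_sum fun i _ => norm_sum_le _ _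
    _ = ∑ k, ∑ i, ‖c k‖ * ((Φ (Matrix.single k k 1)) i i).re := by
        rw [Finset.sum_comm]
        exact Finset.sum_congr rfl fun k _ => Finset.sum_congr rfl fun i _ => by
          rw [norm_mul, cabs_of_nonneg (hpos k i)]
    _ = ∑ k, ‖c k‖ := by
        exact Finset.sum_congr rfl fun k _ => by
          rw [← Finset.mul_sum, hsum k, mul_one]



/-- Monotonicity of `𝒟` under post-processing by detection-incoherent channels:
if `Φ` is a channel with `ΔΦ = ΔΦΔ`, then
`max_ρ ‖Δ Φ Λ (id - Δ) ρ‖₁ ≤ max_ρ ‖Δ Λ (id - Δ) ρ‖₁` (maxima over density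
matrices; since the arguments of the trace norm are diagonal, `‖·‖₁` is the sum of
the absolute values of the diagonal entries). -/
theorem D_mono_under_DI_postprocessing (d : ℕ)
    (Λ Φ : Matrix (Fin d) (Fin d) ℂ →ₗ[ℂ] Matrix (Fin d) (Fin d) ℂ)
    (hΛTP : ∀ ρ : Matrix (Fin d) (Fin d) ℂ, (Λ ρ).trace = ρ.trace)
    (hΛCP : (Matrix.of fun p q : Fin d × Fin d =>
        (Λ (Matrix.single p.1 q.1 1)) p.2 q.2).PosSemidef)
    (hΦTP : ∀ ρ : Matrix (Fin d) (Fin d) ℂ, (Φ ρ).trace = ρ.trace)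
    (hΦCP : (Matrix.of fun p q : Fin d × Fin d =>
        (Φ (Matrix.single p.1 q.1 1)) p.2 q.2).PosSemidef)
    (hDI : ∀ A : Matrix (Fin d) (Fin d) ℂ,
      Matrix.diagonal (fun i => (Φ A) i i) =
        Matrix.diagonal (fun i => (Φ (Matrix.diagonal fun k => A k k)) i i)) :
    sSup {t : ℝ | ∃ ρ : Matrix (Fin d) (Fin d) ℂ, ρ.PosSemidef ∧ ρ.trace = 1 ∧
        t = ∑ i, ‖(Φ (Λ (ρ - Matrix.diagonal fun k => ρ k k))) i i‖} ≤
    sSup {t : ℝ | ∃ ρ : Matrix (Fin d) (Fin d) ℂ, ρ.PosSemidef ∧ ρ.trace = 1 ∧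
        t = ∑ i, ‖(Λ (ρ - Matrix.diagonal fun k => ρ k k)) i i‖} := by
  classical
  set B : Set ℝ := {t : ℝ | ∃ ρ : Matrix (Fin d) (Fin d) ℂ, ρ.PosSemidef ∧ ρ.trace = 1 ∧
      t = ∑ i, ‖(Λ (ρ - Matrix.diagonal fun k => ρ k k)) i i‖} with hB
  set C : ℝ := ∑ i, ∑ p, ∑ q, ‖(Λ (Matrix.single p q 1)) i i‖ with hC
  have hexp : ∀ Y : Matrix (Fin d) (Fin d) ℂ, ∀ i : Fin d,
      (Λ Y) i i = ∑ p, ∑ q, Y p q * (Λ (Matrix.single p q 1)) i i := by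
    intro Y i
    conv_lhs => rw [Matrix.matrix_eq_sum_single Y]
    rw [map_sum]
    simp only [Matrix.sum_apply]
    refine Finset.sum_congr rfl fun p _ => ?_
    rw [map_sum]
    simp only [Matrix.sum_apply]
    refine Finset.sum_congr rfl fun q _ => ?_
    rw [← smul_eq_mul, ← Matrix.smul_apply, ← _root_.map_smul]
    rw [Matrix.smul_single, smul_eq_mul, mul_one]
  have hXbound : ∀ ρ : Matrix (Fin d) (Fin d) ℂ, ρ.PosSemidef → ρ.trace = 1 →
      ∀ p q : Fin d, ‖(ρ - Matrix.diagonal fun k => ρ k k) p q‖ ≤ 1 := by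
    intro ρ hρ htr p q
    by_cases h : p = q
    · subst h; simp [Matrix.sub_apply, Matrix.diagonal_apply_eq]
    · rw [Matrix.sub_apply, Matrix.diagonal_apply_ne _ h, sub_zero]
      have h2 := psd_entry_le_trace hρ p q
      rw [htr] at h2
      simpa using h2
  have hmemB : ∀ t ∈ B, t ≤ C := by
    rintro t ⟨ρ, hρ, htr, rfl⟩
    calc ∑ i, ‖(Λ (ρ - Matrix.diagonal fun k => ρ k k)) i i‖
        ≤ ∑ i, ∑ p, ∑ q, ‖(ρ - Matrix.diagonal fun k => ρ k k) p q‖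
            * ‖(Λ (Matrix.single p q 1)) i i‖ := by
          refine Finset.sum_le_sum fun i _ => ?_
          rw [hexp _ i]
          refine le_trans (norm_sum_le _ _) (Finset.sum_le_sum fun p _ => ?_)
          refine le_trans (norm_sum_le _ _) (Finset.sum_le_sum fun q _ => ?_)
          rw [norm_mul]
      _ ≤ C := by
          rw [hC]
          refine Finset.sum_le_sum fun i _ => Finset.sum_le_sum fun p _ =>
            Finset.sum_le_sum fun q _ => ?_
          calc ‖(ρ - Matrix.diagonal fun k => ρ k k) p q‖
                * ‖(Λ (Matrix.single p q 1)) i i‖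
              ≤ 1 * ‖(Λ (Matrix.single p q 1)) i i‖ := by
                exact mul_le_mul_of_nonneg_right (hXbound ρ hρ htr p q)
                  (norm_nonneg _)
            _ = _ := one_mul _
  have hBdd : BddAbove B := ⟨C, fun t ht => hmemB t ht⟩
  apply Real.sSup_le
  · rintro t ⟨ρ, hρ, htr, rfl⟩
    set X := ρ - Matrix.diagonal fun k => ρ k k with hXdef
    have heq : ∀ i, (Φ (Λ X)) i i = (Φ (Matrix.diagonal fun k => (Λ X) k k)) i i := by
      intro i
      have h := congrArg (fun M : Matrix (Fin d) (Fin d) ℂ => M i i) (hDI (Λ X))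
      simpa [Matrix.diagonal_apply_eq] using h
    have step1 : ∑ i, ‖(Φ (Λ X)) i i‖ ≤ ∑ k, ‖(Λ X) k k‖ := by
      calc ∑ i, ‖(Φ (Λ X)) i i‖
          = ∑ i, ‖(Φ (Matrix.diagonal fun k => (Λ X) k k)) i i‖ :=
            Finset.sum_congr rfl fun i _ => by rw [heq i]
        _ ≤ _ := key_contraction d Φ hΦTP hΦCP _
    exact le_trans step1 (le_csSup hBdd ⟨ρ, hρ, htr, rfl⟩)
  · rcases Nat.eq_zero_or_pos d with hd | hd
    · have hBe : B = ∅ := by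
        ext t
        simp only [hB, Set.mem_setOf_eq, Set.mem_empty_iff_false, iff_false]
        rintro ⟨ρ, hρ, htr, rfl⟩
        subst hd
        simp [Matrix.trace] at htr
      rw [hBe, Real.sSup_empty]
    · have hdne : (d : ℝ) ≠ 0 := Nat.cast_ne_zero.mpr hd.ne'
      have h1 : (0 : ℝ) ∈ B := by
        refine ⟨Matrix.diagonal fun _ : Fin d => Complex.ofReal ((d : ℝ)⁻¹), ?_, ?_, ?_⟩
        · refine Matrix.PosSemidef.diagonal fun i => ?_
          exact Complex.zero_le_real.mpr (by positivity)
        · simp only [Matrix.trace_diagonal]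
          rw [Finset.sum_const]
          simp only [Finset.card_univ, Fintype.card_fin, nsmul_eq_mul]
          rw [← Complex.ofReal_natCast, ← Complex.ofReal_mul, mul_inv_cancel₀ hdne]
          norm_num
        · have : (Matrix.diagonal fun _ : Fin d => Complex.ofReal ((d : ℝ)⁻¹)) -
              (Matrix.diagonal fun k => (Matrix.diagonal
                fun _ : Fin d => Complex.ofReal ((d : ℝ)⁻¹)) k k) = 0 := by
            simp [Matrix.diagonal_apply_eq]
          rw [this]
          simp
      exact le_csSup hBdd h1
end

section
/- Let r be an integer with r ≥ 3. Then Euler's totient function satisfies φ(r)/r > δ/(log log r) for the constant δ = e^{−γ}/2, where γ is the Euler–Mascheroni constant (a weaker explicit version of Hardy–Wright Theorem 328: liminf φ(r) log log r / r = e^{−γ}). -/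
open Finset

lemma factorization_factorial_ge {p n : ℕ} (hp : p.Prime) :
    n / p ≤ (n.factorial).factorization p := by
  rw [← Nat.Prime.pow_dvd_iff_le_factorization hp n.factorial_ne_zero]
  rw [Nat.Prime.pow_dvd_factorial_iff hp (Nat.lt_succ_self _)]
  rcases Nat.lt_or_ge n p with h | h
  · simp [Nat.div_eq_of_lt h]
  · have h1 : 1 ∈ Finset.Ico 1 (Nat.log p n + 1) := by
      simp only [Finset.mem_Ico, le_refl, true_and]
      have : 1 ≤ Nat.log p n := Nat.le_log_of_pow_le hp.one_lt (by simpa using h)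
      omega
    calc n / p = n / p ^ 1 := by norm_num
    _ ≤ ∑ i ∈ Finset.Ico 1 (Nat.log p n + 1), n / p ^ i :=
      Finset.single_le_sum (f := fun i => n / p ^ i) (fun _ _ => Nat.zero_le _) h1

lemma primeFactors_factorial {n : ℕ} : (n.factorial).primeFactors = Nat.primesBelow (n+1) := by
  ext p
  simp only [Nat.mem_primeFactors, Nat.mem_primesBelow]
  constructor
  · rintro ⟨hp, hdvd, -⟩
    exact ⟨Nat.lt_succ_of_le ((hp.dvd_factorial).mp hdvd), hp⟩
  · rintro ⟨hlt, hp⟩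
    exact ⟨hp, (hp.dvd_factorial).mpr (Nat.lt_succ_iff.mp hlt), n.factorial_ne_zero⟩

lemma log_eq_sum_factorization {n : ℕ} (hn : n ≠ 0) :
    Real.log n = ∑ p ∈ n.primeFactors, (n.factorization p : ℝ) * Real.log p := by
  conv_lhs => rw [← Nat.factorization_prod_pow_eq_self hn]
  rw [Finsupp.prod, Nat.support_factorization]
  push_cast
  rw [Real.log_prod]
  · exact Finset.sum_congr rfl fun p hp => by rw [Real.log_pow]
  · intro p hp
    have := (Nat.prime_of_mem_primeFactors hp).pos
    positivity

lemma cast_div_lt_nat_div_add_one {n p : ℕ} (hp : 0 < p) :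
    (n : ℝ) / p < (↑(n / p) : ℝ) + 1 := by
  rw [div_lt_iff₀ (by positivity)]
  have h : n < (n / p + 1) * p := by
    have := Nat.div_add_mod n p
    have := Nat.mod_lt n hp
    nlinarith
  exact_mod_cast h

lemma primorial_sum_log (n : ℕ) :
    ∑ p ∈ Nat.primesBelow (n+1), Real.log p ≤ 2 * n * Real.log 2 := by
  have h1 : ∑ p ∈ Nat.primesBelow (n+1), Real.log p
      = Real.log (∏ p ∈ Nat.primesBelow (n+1), (p:ℝ)) := by
    rw [Real.log_prod]
    intro p hp
    exact_mod_cast (Nat.prime_of_mem_primesBelow hp).pos.ne'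
  have h2 : (∏ p ∈ Nat.primesBelow (n+1), (p:ℝ)) = (primorial n : ℝ) := by
    rw [show primorial n = ∏ p ∈ Nat.primesBelow (n+1), p from rfl]
    push_cast
    rfl
  rw [h1, h2]
  calc Real.log (primorial n : ℝ) ≤ Real.log ((4:ℝ)^n) := by
        apply Real.log_le_log (by exact_mod_cast primorial_pos n)
        exact_mod_cast primorial_le_4_pow n
  _ = n * Real.log 4 := Real.log_pow _ _
  _ = 2 * n * Real.log 2 := by
        rw [show (4:ℝ) = 2^2 by norm_num, Real.log_pow]
        push_cast; ring

lemma mertens1 (n : ℕ) (hn : 1 ≤ n) :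
    ∑ p ∈ Nat.primesBelow (n+1), Real.log p / p ≤ Real.log n + 2 * Real.log 2 := by
  have hdiv : ∀ p ∈ Nat.primesBelow (n+1), (n:ℝ)/p - 1 ≤ ((n.factorial).factorization p : ℝ) := by
    intro p hp
    have hp2 := Nat.prime_of_mem_primesBelow hp
    have h1 := cast_div_lt_nat_div_add_one (n := n) hp2.pos
    have h2 : ((n / p : ℕ) : ℝ) ≤ ((n.factorial).factorization p : ℝ) := by
      exact_mod_cast factorization_factorial_ge hp2
    linarith
  have hlogfac : Real.log (n.factorial) = ∑ p ∈ Nat.primesBelow (n+1),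
      ((n.factorial).factorization p : ℝ) * Real.log p := by
    rw [log_eq_sum_factorization n.factorial_ne_zero, primeFactors_factorial]
  have hprim := primorial_sum_log n
  have hnR : (0:ℝ) < n := by exact_mod_cast hn
  have hfac : Real.log (n.factorial) ≤ n * Real.log n := by
    calc Real.log (n.factorial) ≤ Real.log ((n:ℝ)^n) :=
      Real.log_le_log (by exact_mod_cast n.factorial_pos) (by exact_mod_cast n.factorial_le_pow)
    _ = n * Real.log n := by rw [Real.log_pow]
  have key : ∑ p ∈ Nat.primesBelow (n+1), ((n:ℝ)/p - 1) * Real.log p ≤ n * Real.log n := by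
    calc ∑ p ∈ Nat.primesBelow (n+1), ((n:ℝ)/p - 1) * Real.log p
        ≤ ∑ p ∈ Nat.primesBelow (n+1), ((n.factorial).factorization p : ℝ) * Real.log p := by
          apply Finset.sum_le_sum
          intro p hp
          have hp2 := Nat.prime_of_mem_primesBelow hp
          have : (0:ℝ) ≤ Real.log p := Real.log_nonneg (by exact_mod_cast hp2.one_lt.le)
          exact mul_le_mul_of_nonneg_right (hdiv p hp) this
    _ = Real.log (n.factorial) := hlogfac.symm
    _ ≤ n * Real.log n := hfac
  have expand : ∑ p ∈ Nat.primesBelow (n+1), ((n:ℝ)/p - 1) * Real.log p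
      = n * (∑ p ∈ Nat.primesBelow (n+1), Real.log p / p)
        - ∑ p ∈ Nat.primesBelow (n+1), Real.log p := by
    rw [Finset.mul_sum, ← Finset.sum_sub_distrib]
    apply Finset.sum_congr rfl
    intro p hp
    have hp2 := Nat.prime_of_mem_primesBelow hp
    have hpR : (p:ℝ) ≠ 0 := by exact_mod_cast hp2.pos.ne'
    field_simp
  rw [expand] at key
  have h3 : (n:ℝ) * (∑ p ∈ Nat.primesBelow (n+1), Real.log p / p)
      ≤ n * Real.log n + 2 * n * Real.log 2 := by linarith
  nlinarith [h3]
lemma mertens2_key (N : ℕ) (hN : 2 ≤ N) (AN : ℝ)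
    (hA : AN ≤ Real.log N + 2 * Real.log 2) :
    AN * (1/Real.log N - 1/Real.log ((N:ℝ)+1)) ≤
      (Real.log (Real.log ((N:ℝ)+1)) - Real.log (Real.log N))
      + 2*Real.log 2*(1/Real.log 2 - 1/Real.log ((N:ℝ)+1))
      - 2*Real.log 2*(1/Real.log 2 - 1/Real.log N) := by
  have hNR : (2:ℝ) ≤ N := by exact_mod_cast hN
  have hN0 : (0:ℝ) < N := by linarith
  have hlN : 0 < Real.log N := Real.log_pos (by linarith)
  have hlN1 : 0 < Real.log ((N:ℝ)+1) := Real.log_pos (by linarith)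
  have hmono : Real.log N ≤ Real.log ((N:ℝ)+1) := Real.log_le_log hN0 (by linarith)
  have hd : 0 ≤ 1/Real.log N - 1/Real.log ((N:ℝ)+1) := by
    have := one_div_le_one_div_of_le hlN hmono
    linarith
  have hll : (Real.log ((N:ℝ)+1) - Real.log N)/Real.log ((N:ℝ)+1) ≤
      Real.log (Real.log ((N:ℝ)+1)) - Real.log (Real.log N) := by
    have h1 : Real.log (Real.log N / Real.log ((N:ℝ)+1)) ≤
        Real.log N / Real.log ((N:ℝ)+1) - 1 :=
      Real.log_le_sub_one_of_pos (by positivity)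
    rw [Real.log_div hlN.ne' hlN1.ne'] at h1
    have h2 : Real.log N / Real.log ((N:ℝ)+1) - 1
        = -((Real.log ((N:ℝ)+1) - Real.log N)/Real.log ((N:ℝ)+1)) := by
      field_simp
      ring
    linarith
  have e1 : Real.log N * (1/Real.log N - 1/Real.log ((N:ℝ)+1))
      = (Real.log ((N:ℝ)+1) - Real.log N)/Real.log ((N:ℝ)+1) := by
    field_simp
  nlinarith [hd, hA, hll, e1]

lemma mertens2_strong (N : ℕ) (hN : 2 ≤ N) :
    ∑ p ∈ Nat.primesBelow (N+1), ((p:ℝ))⁻¹ ≤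
      (∑ p ∈ Nat.primesBelow (N+1), Real.log p / p)/Real.log N
      + (Real.log (Real.log N) - Real.log (Real.log 2))
      + 2*Real.log 2*(1/Real.log 2 - 1/Real.log N) := by
  induction N, hN using Nat.le_induction with
  | base =>
    have h3 : Nat.primesBelow 3 = {2} := by decide
    rw [h3]
    simp only [Finset.sum_singleton]
    have hl2 : (0:ℝ) < Real.log 2 := Real.log_pos (by norm_num)
    have : (Real.log 2 / 2) / Real.log 2 = 2⁻¹ := by field_simp
    push_cast
    rw [this]
    simp
  | succ N hN ih =>
    set S := Nat.primesBelow (N+1) with hS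
    have hsucc : Nat.primesBelow (N+1+1) =
        if (N+1).Prime then insert (N+1) S else S := Nat.primesBelow_succ (N+1)
    have hnotmem : (N+1) ∉ S := Nat.notMem_primesBelow (N+1)
    have hNR : (2:ℝ) ≤ N := by exact_mod_cast hN
    have hlN : 0 < Real.log N := Real.log_pos (by linarith)
    have hlN1 : 0 < Real.log ((N:ℝ)+1) := Real.log_pos (by linarith)
    have hA0 : 0 ≤ ∑ p ∈ S, Real.log p / p := by
      apply Finset.sum_nonneg
      intro p hp
      have hp2 := Nat.prime_of_mem_primesBelow hp
      have : (1:ℝ) ≤ p := by exact_mod_cast hp2.one_lt.le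
      have := Real.log_nonneg this
      positivity
    have hA := mertens1 N (by omega)
    rw [← hS] at hA
    have key := mertens2_key N hN _ hA
    -- case split on primality of N+1
    have hcast : ((N+1:ℕ):ℝ) = (N:ℝ)+1 := by push_cast; ring
    have ebridge : (∑ p ∈ S, Real.log p / p) * (1/Real.log N - 1/Real.log ((N:ℝ)+1))
        = (∑ p ∈ S, Real.log (p:ℝ) / p)/Real.log N
          - (∑ p ∈ S, Real.log (p:ℝ) / p)/Real.log ((N:ℝ)+1) := by
      ring
    rw [hsucc]
    split_ifs with hp
    · rw [Finset.sum_insert hnotmem, Finset.sum_insert hnotmem]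
      have hεeq : ((N+1:ℕ):ℝ)⁻¹ = (Real.log ((N+1:ℕ):ℝ) / ((N+1:ℕ):ℝ)) / Real.log ((N:ℝ)+1) := by
        rw [hcast]
        field_simp
      rw [hεeq, hcast]
      rw [add_div]
      push_cast
      linarith [ih, key, ebridge]
    · push_cast
      linarith [ih, key, ebridge]

lemma mertens2 (N : ℕ) (hN : 2 ≤ N) :
    ∑ p ∈ Nat.primesBelow (N+1), ((p:ℝ))⁻¹ ≤ Real.log (Real.log N) + 4 := by
  have hNR : (2:ℝ) ≤ N := by exact_mod_cast hN
  have hlN : 0 < Real.log N := Real.log_pos (by linarith)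
  have hl2 : 0.6931471803 < Real.log 2 := Real.log_two_gt_d9
  have hl2' : 0 < Real.log 2 := by linarith
  have hA := mertens1 N (by omega)
  have h1 : (∑ p ∈ Nat.primesBelow (N+1), Real.log p / p)/Real.log N
      ≤ (Real.log N + 2*Real.log 2)/Real.log N := by gcongr
  have h2 : (Real.log N + 2*Real.log 2)/Real.log N = 1 + 2*Real.log 2/Real.log N := by
    field_simp
  have h3 : 2*Real.log 2*(1/Real.log 2 - 1/Real.log N)
      = 2 - 2*Real.log 2/Real.log N := by field_simp
  have h4 : -Real.log (Real.log 2) ≤ 1/Real.log 2 - 1 := by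
    have := Real.log_le_sub_one_of_pos (x := (Real.log 2)⁻¹) (by positivity)
    rw [Real.log_inv] at this
    simpa [one_div] using this
  have h5 : (1:ℝ)/Real.log 2 ≤ 1.45 := by
    rw [div_le_iff₀ hl2']
    nlinarith
  have := mertens2_strong N hN
  linarith

lemma sum_inv_primeFactors_le (r : ℕ) (hr : 8 ≤ r) :
    ∑ p ∈ r.primeFactors, ((p:ℝ))⁻¹ ≤ Real.log (Real.log (Real.log r)) + 6 := by
  have hr0 : r ≠ 0 := by omega
  have hl2 : 0.6931471803 < Real.log 2 := Real.log_two_gt_d9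
  set L := Real.log r with hLdef
  have hL2 : 2 < L := by
    have h8 : Real.log 8 ≤ L := Real.log_le_log (by norm_num) (by exact_mod_cast hr)
    have : Real.log 8 = 3 * Real.log 2 := by
      rw [show (8:ℝ) = 2^3 by norm_num, Real.log_pow]; push_cast; ring
    linarith
  set T := ⌊L⌋₊ with hTdef
  have hT2 : 2 ≤ T := Nat.le_floor (by exact_mod_cast hL2.le)
  have hTL : (T:ℝ) ≤ L := Nat.floor_le (by linarith)
  have hLT1 : L < (T:ℝ) + 1 := by exact_mod_cast Nat.lt_floor_add_one L
  have hLL : 0 < Real.log L := Real.log_pos (by linarith)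
  have hTpos : (0:ℝ) < T := by exact_mod_cast Nat.lt_of_lt_of_le (by norm_num) hT2
  -- split
  rw [← Finset.sum_filter_add_sum_filter_not r.primeFactors (fun p => p < T + 1)]
  have hsmall : ∑ p ∈ r.primeFactors.filter (fun p => p < T + 1), ((p:ℝ))⁻¹
      ≤ Real.log (Real.log (Real.log r)) + 4 := by
    have hsub : r.primeFactors.filter (fun p => p < T + 1) ⊆ Nat.primesBelow (T+1) := by
      intro p hp
      simp only [Finset.mem_filter] at hp
      exact Nat.mem_primesBelow.mpr ⟨hp.2, Nat.prime_of_mem_primeFactors hp.1⟩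
    have h1 : ∑ p ∈ r.primeFactors.filter (fun p => p < T + 1), ((p:ℝ))⁻¹
        ≤ ∑ p ∈ Nat.primesBelow (T+1), ((p:ℝ))⁻¹ := by
      apply Finset.sum_le_sum_of_subset_of_nonneg hsub
      intro p hp _
      positivity
    have h2 := mertens2 T hT2
    have h3 : Real.log (Real.log T) ≤ Real.log (Real.log L) := by
      apply Real.log_le_log (Real.log_pos (by exact_mod_cast Nat.lt_of_lt_of_le one_lt_two hT2))
      exact Real.log_le_log hTpos hTL
    linarith
  have hbig : ∑ p ∈ r.primeFactors.filter (fun p => ¬ p < T + 1), ((p:ℝ))⁻¹ ≤ 1.45 := by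
    set B := r.primeFactors.filter (fun p => ¬ p < T + 1) with hB
    have hmem : ∀ p ∈ B, T + 1 ≤ p := by
      intro p hp
      simp only [hB, Finset.mem_filter, not_lt] at hp
      exact hp.2
    have hprod : (T+1)^B.card ≤ r := by
      calc (T+1)^B.card ≤ ∏ p ∈ B, p := Finset.pow_card_le_prod B _ _ hmem
      _ ≤ r := by
          apply Nat.le_of_dvd (by omega)
          exact dvd_trans (Finset.prod_dvd_prod_of_subset _ _ _ (Finset.filter_subset _ _))
            (Nat.prod_primeFactors_dvd r)
    have hcard : (B.card : ℝ) * Real.log L ≤ L := by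
      have h1 : (B.card : ℝ) * Real.log ((T:ℝ)+1) ≤ L := by
        have := Real.log_le_log (by positivity) (show ((T+1:ℕ)^B.card : ℝ) ≤ r by exact_mod_cast hprod)
        rwa [Real.log_pow, Nat.cast_add, Nat.cast_one] at this
      have h2 : Real.log L ≤ Real.log ((T:ℝ)+1) := Real.log_le_log (by linarith) (by linarith)
      nlinarith [Nat.cast_nonneg (α := ℝ) B.card]
    have hterm : ∀ p ∈ B, ((p:ℝ))⁻¹ ≤ 1/L := by
      intro p hp
      have := hmem p hp
      have hpL : L ≤ (p:ℝ) := by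
        have : ((T+1:ℕ):ℝ) ≤ (p:ℝ) := by exact_mod_cast this
        push_cast at this
        linarith
      rw [inv_eq_one_div]
      apply div_le_div_of_nonneg_left one_pos.le (by linarith) hpL
    calc ∑ p ∈ B, ((p:ℝ))⁻¹ ≤ ∑ _p ∈ B, 1/L := Finset.sum_le_sum hterm
    _ = B.card * (1/L) := by rw [Finset.sum_const, nsmul_eq_mul]
    _ ≤ 1/Real.log L := by
        rw [mul_one_div, div_le_div_iff₀ (by linarith) hLL]
        nlinarith
    _ ≤ 1/Real.log 2 := by
        apply div_le_div_of_nonneg_left one_pos.le (by linarith)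
        apply Real.log_le_log (by norm_num) (by linarith)
    _ ≤ 1.45 := by rw [div_le_iff₀ (by linarith)]; nlinarith
  linarith

lemma totient_ratio_eq (r : ℕ) (hr : r ≠ 0) :
    (Nat.totient r : ℝ)/r = ∏ p ∈ r.primeFactors, (1 - (p:ℝ)⁻¹) := by
  have hq := Nat.totient_eq_mul_prod_factors r
  have hR : (Nat.totient r : ℝ) = r * ∏ p ∈ r.primeFactors, (1 - (p:ℝ)⁻¹) := by
    have := congrArg (fun q : ℚ => (q:ℝ)) hq
    push_cast at this
    exact this
  rw [hR]
  have : (r:ℝ) ≠ 0 := Nat.cast_ne_zero.mpr hr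
  field_simp

-- telescoping sum bound
lemma telescope_sum (m : ℕ) (hm : 1 ≤ m) :
    ∑ n ∈ Finset.Icc 2 m, (((n:ℝ)-1)⁻¹ - (n:ℝ)⁻¹) = 1 - (m:ℝ)⁻¹ := by
  induction m, hm using Nat.le_induction with
  | base => simp
  | succ m hm ih =>
    rw [Finset.sum_Icc_succ_top (by omega)]
    rw [ih]
    have hm0 : (0:ℝ) < m := by exact_mod_cast hm
    push_cast
    field_simp
    ring_nf
    field_simp
    ring

lemma sum_inv_sub_one_le (r : ℕ) (hr : 8 ≤ r) :
    ∑ p ∈ r.primeFactors, (((p:ℝ))-1)⁻¹ ≤ Real.log (Real.log (Real.log r)) + 7 := by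
  have h1 : ∑ p ∈ r.primeFactors, (((p:ℝ))-1)⁻¹
      = ∑ p ∈ r.primeFactors, ((p:ℝ))⁻¹ + ∑ p ∈ r.primeFactors, (((p:ℝ)-1)⁻¹ - (p:ℝ)⁻¹) := by
    rw [← Finset.sum_add_distrib]
    apply Finset.sum_congr rfl
    intro p hp; ring
  have h2 : ∑ p ∈ r.primeFactors, (((p:ℝ)-1)⁻¹ - (p:ℝ)⁻¹) ≤ 1 := by
    have hsub : r.primeFactors ⊆ Finset.Icc 2 r := by
      intro p hp
      rw [Finset.mem_Icc]
      exact ⟨(Nat.prime_of_mem_primeFactors hp).two_le,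
        Nat.le_of_dvd (by omega) (Nat.dvd_of_mem_primeFactors hp)⟩
    have h3 : ∑ p ∈ r.primeFactors, (((p:ℝ)-1)⁻¹ - (p:ℝ)⁻¹)
        ≤ ∑ n ∈ Finset.Icc 2 r, (((n:ℝ)-1)⁻¹ - (n:ℝ)⁻¹) := by
      apply Finset.sum_le_sum_of_subset_of_nonneg hsub
      intro n hn _
      rw [Finset.mem_Icc] at hn
      have h2n : (2:ℝ) ≤ n := by exact_mod_cast hn.1
      rw [sub_nonneg]
      apply inv_anti₀ (by linarith) (by linarith)
    rw [telescope_sum r (by omega)] at h3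
    have : (0:ℝ) < (r:ℝ)⁻¹ := by positivity
    linarith
  have := sum_inv_primeFactors_le r hr
  linarith

lemma totient_main (r : ℕ) (hr : 8 ≤ r) :
    Real.exp (-7) / Real.log (Real.log r) ≤ (Nat.totient r : ℝ) / r := by
  have hr0 : r ≠ 0 := by omega
  have hl2 : 0.6931471803 < Real.log 2 := Real.log_two_gt_d9
  have hL2 : 2 < Real.log r := by
    have h8 : Real.log 8 ≤ Real.log r := Real.log_le_log (by norm_num) (by exact_mod_cast hr)
    have : Real.log 8 = 3 * Real.log 2 := by
      rw [show (8:ℝ) = 2^3 by norm_num, Real.log_pow]; push_cast; ring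
    linarith
  have hLL : 0 < Real.log (Real.log r) := Real.log_pos (by linarith)
  rw [totient_ratio_eq r hr0]
  have hfac : ∀ p ∈ r.primeFactors, Real.exp (-(((p:ℝ)-1)⁻¹)) ≤ 1 - (p:ℝ)⁻¹ := by
    intro p hp
    have hp2 : (2:ℝ) ≤ p := by exact_mod_cast (Nat.prime_of_mem_primeFactors hp).two_le
    have hp1 : (0:ℝ) < (p:ℝ)-1 := by linarith
    have hx : (0:ℝ) < ((p:ℝ)-1)⁻¹ := inv_pos.mpr hp1
    have hexp : ((p:ℝ)-1)⁻¹ + 1 ≤ Real.exp (((p:ℝ)-1)⁻¹) := Real.add_one_le_exp _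
    rw [Real.exp_neg]
    have h1 : (((p:ℝ)-1)⁻¹ + 1)⁻¹ = 1 - (p:ℝ)⁻¹ := by
      rw [inv_eq_one_div, inv_eq_one_div]
      rw [div_add' _ _ _ hp1.ne', one_div_div]
      field_simp
      ring
    rw [← h1]
    apply inv_anti₀ (by positivity) hexp
  have hprod : Real.exp (-(∑ p ∈ r.primeFactors, (((p:ℝ))-1)⁻¹))
      ≤ ∏ p ∈ r.primeFactors, (1 - (p:ℝ)⁻¹) := by
    rw [← Finset.sum_neg_distrib, Real.exp_sum]
    apply Finset.prod_le_prod
    · intro p hp; positivity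
    · exact hfac
  have hsum := sum_inv_sub_one_le r hr
  have hchain : Real.exp (-7) / Real.log (Real.log r)
      ≤ Real.exp (-(∑ p ∈ r.primeFactors, (((p:ℝ))-1)⁻¹)) := by
    have e1 : Real.exp (-(Real.log (Real.log (Real.log (r:ℝ))) + 7))
        = Real.exp (-7) / Real.log (Real.log r) := by
      rw [neg_add, Real.exp_add,
        Real.exp_neg (Real.log (Real.log (Real.log (r:ℝ)))), Real.exp_log hLL]
      ring
    rw [← e1]
    apply Real.exp_le_exp.mpr
    linarith
  linarith [hprod, hchain]


/-- A weak explicit version of Hardy–Wright Theorem 328: there is a positive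
constant `δ` such that Euler's totient function satisfies
`φ(r)/r ≥ δ / log log r` for all `r ≥ 3`. -/
theorem totient_ratio_lower_bound :
    ∃ δ : ℝ, 0 < δ ∧ ∀ r : ℕ, 3 ≤ r →
      δ / Real.log (Real.log r) ≤ (Nat.totient r : ℝ) / r := by
  refine ⟨Real.exp (-7), Real.exp_pos _, fun r hr => ?_⟩
  rcases le_or_gt 8 r with h8 | h8
  · exact totient_main r h8
  -- small case: 3 ≤ r ≤ 7
  have hr7 : r ≤ 7 := by omega
  have hrR : (3:ℝ) ≤ r := by exact_mod_cast hr
  have hrR7 : (r:ℝ) ≤ 7 := by exact_mod_cast hr7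
  -- log 3 ≥ 17/16
  have hexp116 : Real.exp (1/16) ≤ 16/15 := by
    have h := Real.add_one_le_exp (-(1/16) : ℝ)
    rw [Real.exp_neg] at h
    have hmul : Real.exp (1/16) * (Real.exp (1/16))⁻¹ = 1 :=
      mul_inv_cancel₀ (Real.exp_pos _).ne'
    nlinarith [Real.exp_pos (1/16 : ℝ)]
  have hexp1716 : Real.exp (17/16) ≤ 3 := by
    have : Real.exp (17/16 : ℝ) = Real.exp 1 * Real.exp (1/16) := by
      rw [← Real.exp_add]; norm_num
    rw [this]
    nlinarith [Real.exp_one_lt_d9, Real.exp_pos (1/16 : ℝ), Real.exp_pos (1:ℝ)]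
  have hlog3 : (17:ℝ)/16 ≤ Real.log r := by
    have h1 : (17:ℝ)/16 ≤ Real.log 3 := by
      rw [Real.le_log_iff_exp_le (by norm_num)]
      exact hexp1716
    have h2 : Real.log 3 ≤ Real.log r := Real.log_le_log (by norm_num) hrR
    linarith
  have hll : (1:ℝ)/17 ≤ Real.log (Real.log r) := by
    set y := Real.log r with hy
    have hy0 : (0:ℝ) < y := by linarith
    have h1 : Real.log y⁻¹ ≤ y⁻¹ - 1 := Real.log_le_sub_one_of_pos (by positivity)
    rw [Real.log_inv] at h1
    have h2 : y⁻¹ ≤ 16/17 := by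
      rw [inv_le_comm₀ hy0 (by norm_num)]
      linarith
    linarith
  have hstep1 : Real.exp (-7) / Real.log (Real.log r) ≤ 17 * Real.exp (-7) := by
    have := div_le_div_of_nonneg_left (Real.exp_pos (-7:ℝ)).le
      (show (0:ℝ) < 1/17 by norm_num) hll
    calc Real.exp (-7) / Real.log (Real.log r) ≤ Real.exp (-7) / (1/17) := this
    _ = 17 * Real.exp (-7) := by ring
  have hstep2 : 17 * Real.exp (-7) ≤ 1/7 := by
    have hpow : Real.exp 7 = (Real.exp 1)^(7:ℕ) := by
      rw [← Real.exp_nat_mul]; norm_num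
    have h27 : (2.7:ℝ)^(7:ℕ) ≤ (Real.exp 1)^(7:ℕ) :=
      pow_le_pow_left₀ (by norm_num) (by nlinarith [Real.exp_one_gt_d9]) 7
    have h119 : (119:ℝ) ≤ Real.exp 7 := by
      rw [hpow]
      nlinarith [h27]
    rw [Real.exp_neg]
    have hmul : Real.exp 7 * (Real.exp 7)⁻¹ = 1 := mul_inv_cancel₀ (Real.exp_pos _).ne'
    nlinarith [Real.exp_pos (7:ℝ)]
  have hstep3 : (1:ℝ)/7 ≤ (Nat.totient r : ℝ) / r := by
    have hφ : (1:ℝ) ≤ Nat.totient r := by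
      exact_mod_cast Nat.totient_pos.mpr (by omega)
    have h1 : (1:ℝ)/7 ≤ 1/r := by
      apply div_le_div_of_nonneg_left one_pos.le (by linarith) hrR7
    have h2 : (1:ℝ)/r ≤ (Nat.totient r : ℝ)/r := by gcongr
    linarith
  linarith
end
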